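/- Let R = k[[x_1, ..., x_n]] and let I be a homogeneous ideal (given as the extension of a homogeneous ideal of k[x_1, ..., x_n]) or a monomial ideal. Then the filtration f_I on R/I determined by the chain of ideals {I + m^{m+1}}_m is homogeneous (i.e. f_I(x^s) = s · f_I(x) for all s ∈ ℕ and x) if and only if I is a radical ideal. -/

import Mathlib

/-- The maximal ideal `(x_1, ..., x_n)` of the formal power series ring `k[[x_1, ..., x_n]]`. -/
noncomputable def mIdeal (k : Type) [Field k] (n : ℕ) : Ideal (MvPowerSeries (Fin n) k) :=
  RingHom.ker (MvPowerSeries.constantCoeff : MvPowerSeries (Fin n) k →+* k)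

/-- The filtration `f_I : R/I → ℕ ∪ {∞}` determined by the chain of ideals
`{I + 𝔪^(m+1)}_m`: `f_I g` is the supremum of `m + 1` over all `m` with
`g ∈ (I + 𝔪^(m+1))/I`. -/
noncomputable def fI (k : Type) [Field k] {n : ℕ} (I : Ideal (MvPowerSeries (Fin n) k))
    (g : MvPowerSeries (Fin n) k ⧸ I) : ℕ∞ :=
  ⨆ (m : ℕ) (_ : g ∈ (I ⊔ (mIdeal k n) ^ (m + 1)).map (Ideal.Quotient.mk I)),
    ((m : ℕ∞) + 1)

open Finsupp

namespace FIaux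


variable {k : Type} [Field k] {n : ℕ}

/-- homogeneous component of a power series -/
noncomputable def hc (d : ℕ) (f : MvPowerSeries (Fin n) k) : MvPowerSeries (Fin n) k :=
  MvPowerSeries.homogeneousComponent d f

lemma coeff_hc (d : ℕ) (e : Fin n →₀ ℕ) (f : MvPowerSeries (Fin n) k) :
    MvPowerSeries.coeff e (hc d f) = if e.degree = d then MvPowerSeries.coeff e f else 0 :=
  MvPowerSeries.coeff_homogeneousComponent d e f

lemma hc_add (d : ℕ) (f g : MvPowerSeries (Fin n) k) : hc d (f + g) = hc d f + hc d g :=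
  map_add (MvPowerSeries.homogeneousComponent d) f g

lemma hc_zero (d : ℕ) : hc d (0 : MvPowerSeries (Fin n) k) = 0 :=
  map_zero (MvPowerSeries.homogeneousComponent (R := k) (σ := Fin n) d)

lemma hc_hc_self (d : ℕ) (f : MvPowerSeries (Fin n) k) : hc d (hc d f) = hc d f := by
  apply MvPowerSeries.ext; intro e
  simp only [coeff_hc]
  split_ifs <;> rfl

lemma hc_ne {d j : ℕ} (h : j ≠ d) (f : MvPowerSeries (Fin n) k) : hc j (hc d f) = 0 := by
  apply MvPowerSeries.ext; intro e
  simp only [coeff_hc, map_zero]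
  split_ifs with h1 h2
  · omega
  · rfl
  · rfl

lemma degree_add (u v : Fin n →₀ ℕ) : (u + v).degree = u.degree + v.degree := by
  simp [degree_eq_weight_one, map_add]

lemma hc_mul (d : ℕ) (f g : MvPowerSeries (Fin n) k) :
    hc d (f * g) = ∑ p ∈ Finset.HasAntidiagonal.antidiagonal d, hc p.1 f * hc p.2 g := by
  classical
  apply MvPowerSeries.ext; intro e
  rw [map_sum, coeff_hc, MvPowerSeries.coeff_mul]
  have hterm : ∀ p : ℕ × ℕ, MvPowerSeries.coeff e (hc p.1 f * hc p.2 g)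
      = ∑ q ∈ Finset.HasAntidiagonal.antidiagonal e, if q.1.degree = p.1 ∧ q.2.degree = p.2 then
          MvPowerSeries.coeff q.1 f * MvPowerSeries.coeff q.2 g else 0 := by
    intro p
    rw [MvPowerSeries.coeff_mul]
    refine Finset.sum_congr rfl fun q _ => ?_
    rw [coeff_hc, coeff_hc]
    split_ifs with h1 h2 h2 <;> simp_all
  simp_rw [hterm]
  rw [Finset.sum_comm]
  split_ifs with he
  · refine Finset.sum_congr rfl fun q hq => ?_
    have hq' : q.1 + q.2 = e := Finset.HasAntidiagonal.mem_antidiagonal.mp hq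
    have hdeg : q.1.degree + q.2.degree = d := by rw [← degree_add, hq', he]
    rw [Finset.sum_eq_single (q.1.degree, q.2.degree)]
    · simp
    · intro p hp hne
      rw [if_neg]
      rintro ⟨h1, h2⟩
      exact hne (Prod.ext h1.symm h2.symm)
    · intro hnot
      exact absurd (Finset.HasAntidiagonal.mem_antidiagonal.mpr hdeg) hnot
  · symm
    refine Finset.sum_eq_zero fun q hq => Finset.sum_eq_zero fun p hp => ?_
    rw [if_neg]
    rintro ⟨h1, h2⟩
    have hq' : q.1 + q.2 = e := Finset.HasAntidiagonal.mem_antidiagonal.mp hq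
    have hp' : p.1 + p.2 = d := Finset.HasAntidiagonal.mem_antidiagonal.mp hp
    apply he
    rw [← hq', degree_add, h1, h2, hp']

lemma coeff_sum_hc (m : ℕ) (e : Fin n →₀ ℕ) (f : MvPowerSeries (Fin n) k) :
    MvPowerSeries.coeff e (∑ d ∈ Finset.range (m + 1), hc d f)
      = if e.degree ≤ m then MvPowerSeries.coeff e f else 0 := by
  classical
  rw [map_sum]
  simp_rw [coeff_hc]
  rw [Finset.sum_ite_eq (Finset.range (m+1)) e.degree]
  simp [Nat.lt_succ_iff]

lemma eq_sum_hc {f : MvPowerSeries (Fin n) k} {D : ℕ}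
    (hD : ∀ e : Fin n →₀ ℕ, D < e.degree → MvPowerSeries.coeff e f = 0) :
    f = ∑ d ∈ Finset.range (D + 1), hc d f := by
  apply MvPowerSeries.ext; intro e
  rw [coeff_sum_hc]
  split_ifs with h
  · rfl
  · exact hD e (by omega)



variable {k : Type} [Field k] {n : ℕ}

lemma degree_add' (u v : Fin n →₀ ℕ) : (u + v).degree = u.degree + v.degree := by
  simp [degree_eq_weight_one, map_add]

lemma mem_mIdeal_iff {f : MvPowerSeries (Fin n) k} :
    f ∈ mIdeal k n ↔ MvPowerSeries.coeff 0 f = 0 := by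
  rw [mIdeal, RingHom.mem_ker, MvPowerSeries.coeff_zero_eq_constantCoeff]

lemma coeff_eq_zero_of_mem_pow :
    ∀ (m : ℕ) (f : MvPowerSeries (Fin n) k), f ∈ (mIdeal k n) ^ m →
      ∀ e : Fin n →₀ ℕ, e.degree < m → MvPowerSeries.coeff e f = 0 := by
  intro m
  induction m with
  | zero => intro f _ e he; omega
  | succ m ih =>
    intro f hf
    rw [pow_succ] at hf
    refine Submodule.mul_induction_on hf ?_ ?_
    · intro a ha b hb e he
      rw [MvPowerSeries.coeff_mul]
      refine Finset.sum_eq_zero fun q hq => ?_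
      have hq' : q.1 + q.2 = e := Finset.HasAntidiagonal.mem_antidiagonal.mp hq
      have hdeg : q.1.degree + q.2.degree = e.degree := by rw [← degree_add', hq']
      by_cases h1 : q.1.degree < m
      · rw [ih a ha q.1 h1, zero_mul]
      · have h2 : q.2.degree = 0 := by omega
        have h2' : q.2 = 0 := (degree_eq_zero_iff q.2).mp h2
        rw [h2', mem_mIdeal_iff.mp hb, mul_zero]
    · intro x y hx hy e he
      rw [map_add, hx e he, hy e he, add_zero]

/-- auxiliary series used to decompose a series with zero constant term -/
noncomputable def gfun (f : MvPowerSeries (Fin n) k) (i : Fin n) : MvPowerSeries (Fin n) k :=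
  fun e => if ∀ j, j < i → e j = 0 then MvPowerSeries.coeff (e + Finsupp.single i 1) f else 0

lemma coeff_gfun (f : MvPowerSeries (Fin n) k) (i : Fin n) (e : Fin n →₀ ℕ) :
    MvPowerSeries.coeff e (gfun f i) = if ∀ j, j < i → e j = 0 then
      MvPowerSeries.coeff (e + Finsupp.single i 1) f else 0 := rfl



variable {k : Type} [Field k] {n : ℕ}

lemma degree_single (i : Fin n) : (Finsupp.single i 1).degree = 1 := by
  classical
  exact Finsupp.degree_single i 1

lemma coeff_X_mul (i : Fin n) (h : MvPowerSeries (Fin n) k) (e : Fin n →₀ ℕ) :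
    MvPowerSeries.coeff e (MvPowerSeries.X i * h)
      = if Finsupp.single i 1 ≤ e then MvPowerSeries.coeff (e - Finsupp.single i 1) h else 0 := by
  classical
  rw [MvPowerSeries.coeff_mul]
  by_cases hle : Finsupp.single i 1 ≤ e
  · rw [if_pos hle, Finset.sum_eq_single (Finsupp.single i 1, e - Finsupp.single i 1)]
    · rw [MvPowerSeries.coeff_X, if_pos rfl, one_mul]
    · intro q hq hne
      have hq' : q.1 + q.2 = e := Finset.HasAntidiagonal.mem_antidiagonal.mp hq
      rw [MvPowerSeries.coeff_X]
      split_ifs with h1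
      · exfalso; apply hne
        have : q.2 = e - Finsupp.single i 1 := by
          rw [← hq', h1]; exact (add_tsub_cancel_left _ _).symm
        exact Prod.ext h1 this
      · rw [zero_mul]
    · intro hnot
      exfalso; apply hnot
      rw [Finset.HasAntidiagonal.mem_antidiagonal]
      exact add_tsub_cancel_of_le hle
  · rw [if_neg hle]
    refine Finset.sum_eq_zero fun q hq => ?_
    have hq' : q.1 + q.2 = e := Finset.HasAntidiagonal.mem_antidiagonal.mp hq
    rw [MvPowerSeries.coeff_X]
    split_ifs with h1
    · exfalso; exact hle (h1 ▸ hq' ▸ le_add_right le_rfl)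
    · rw [zero_mul]

lemma decomp (f : MvPowerSeries (Fin n) k) (h0 : MvPowerSeries.coeff 0 f = 0) :
    f = ∑ i : Fin n, MvPowerSeries.X i * gfun f i := by
  classical
  apply MvPowerSeries.ext; intro e
  rw [map_sum]
  simp_rw [coeff_X_mul, coeff_gfun]
  by_cases he : e = 0
  · subst he
    rw [h0]
    symm
    refine Finset.sum_eq_zero fun i _ => ?_
    rw [if_neg]
    intro hle
    have := Finsupp.single_le_iff.mp hle
    simp at this
  · have hne : e.support.Nonempty := by
      rw [Finsupp.support_nonempty_iff]; exact he
    set i0 := e.support.min' hne with hi0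
    have hi0mem : i0 ∈ e.support := e.support.min'_mem hne
    have hi0ne : e i0 ≠ 0 := Finsupp.mem_support_iff.mp hi0mem
    rw [Finset.sum_eq_single i0]
    · have hle : Finsupp.single i0 1 ≤ e := Finsupp.single_le_iff.mpr (by omega)
      rw [if_pos hle, if_pos, tsub_add_cancel_of_le hle]
      · intro j hj
        have hj' : ((e - Finsupp.single i0 1 : Fin n →₀ ℕ)) j = e j := by
          rw [Finsupp.tsub_apply, Finsupp.single_apply, if_neg (by omega), tsub_zero]
        rw [hj']
        by_contra hej
        have : j ∈ e.support := Finsupp.mem_support_iff.mpr hej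
        have := e.support.min'_le j this
        omega
    · intro i _ hne2
      split_ifs with h1 h2
      · exfalso
        have hi : e i ≠ 0 := by
          have := Finsupp.single_le_iff.mp h1; omega
        have hi0le : i0 ≤ i := e.support.min'_le i (Finsupp.mem_support_iff.mpr hi)
        have hlt : i0 < i := lt_of_le_of_ne hi0le (fun hh => hne2 hh.symm)
        have := h2 i0 hlt
        have h3 : ((e - Finsupp.single i 1 : Fin n →₀ ℕ)) i0 = e i0 := by
          rw [Finsupp.tsub_apply, Finsupp.single_apply, if_neg (by omega), tsub_zero]
        omega
      · rfl
      · rfl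
    · intro hnot
      exact absurd (Finset.mem_univ i0) hnot

lemma mem_pow_of_vanish :
    ∀ (m : ℕ) (f : MvPowerSeries (Fin n) k),
      (∀ e : Fin n →₀ ℕ, e.degree ≤ m → MvPowerSeries.coeff e f = 0) →
      f ∈ (mIdeal k n) ^ (m + 1) := by
  intro m
  induction m with
  | zero =>
    intro f hf
    rw [pow_one, mem_mIdeal_iff]
    exact hf 0 (by simp)
  | succ m ih =>
    intro f hf
    have h0 : MvPowerSeries.coeff 0 f = 0 := hf 0 (by simp)
    rw [decomp f h0]
    refine Submodule.sum_mem _ fun i _ => ?_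
    have hgi : gfun f i ∈ (mIdeal k n) ^ (m + 1) := by
      apply ih
      intro e he
      rw [coeff_gfun]
      split_ifs with h1
      · apply hf
        rw [degree_add', degree_single]
        omega
      · rfl
    have hXi : MvPowerSeries.X i ∈ mIdeal k n := by
      rw [mem_mIdeal_iff, MvPowerSeries.coeff_X, if_neg]
      intro h
      have := congrFun (congrArg DFunLike.coe h) i
      simp at this
    have : MvPowerSeries.X (σ := Fin n) (R := k) i * gfun f i ∈ mIdeal k n * (mIdeal k n) ^ (m+1) :=
      Submodule.mul_mem_mul hXi hgi
    rwa [← pow_succ'] at this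

end FIaux

namespace FIaux

variable {k : Type} [Field k] {n : ℕ}

lemma hc_coe_homog {p : MvPolynomial (Fin n) k} {c : ℕ} (hp : p.IsHomogeneous c) (j : ℕ) :
    hc j (↑p : MvPowerSeries (Fin n) k) = if j = c then (↑p : MvPowerSeries (Fin n) k) else 0 := by
  apply MvPowerSeries.ext; intro e
  rw [coeff_hc]
  by_cases hj : j = c
  · subst hj
    rw [if_pos rfl]
    split_ifs with h1
    · rfl
    · rw [MvPolynomial.coeff_coe]
      exact (hp.coeff_eq_zero h1).symm
  · rw [if_neg hj, map_zero]
    split_ifs with h1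
    · rw [MvPolynomial.coeff_coe]
      exact hp.coeff_eq_zero (by omega)
    · rfl

/-- every homogeneous component of an element of `I` is in `I`. -/
lemma hc_mem {S₀ : Set (MvPolynomial (Fin n) k)} {I : Ideal (MvPowerSeries (Fin n) k)}
    (hS₀ : ∀ p ∈ S₀, ∃ c, p.IsHomogeneous c)
    (hIS : I = Ideal.span ((fun f : MvPolynomial (Fin n) k =>
        (↑f : MvPowerSeries (Fin n) k)) '' S₀))
    {x : MvPowerSeries (Fin n) k} (hx : x ∈ I) (d : ℕ) : hc d x ∈ I := by
  rw [hIS] at hx ⊢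
  induction hx using Submodule.span_induction generalizing d with
  | mem y hy =>
    obtain ⟨p, hp, rfl⟩ := hy
    obtain ⟨c, hc'⟩ := hS₀ p hp
    rw [hc_coe_homog hc' d]
    split_ifs
    · exact Ideal.subset_span ⟨p, hp, rfl⟩
    · exact Submodule.zero_mem _
  | zero => rw [hc_zero]; exact Submodule.zero_mem _
  | add y z hy hz ihy ihz => rw [hc_add]; exact Submodule.add_mem _ (ihy d) (ihz d)
  | smul a y hy ihy =>
    rw [smul_eq_mul, hc_mul]
    refine Submodule.sum_mem _ fun p _ => ?_
    exact Ideal.mul_mem_left _ _ (ihy p.2)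

/-- the key: membership in `I + 𝔪^(m+1)` is detected by homogeneous components. -/
lemma star {S₀ : Set (MvPolynomial (Fin n) k)} {I : Ideal (MvPowerSeries (Fin n) k)}
    (hS₀ : ∀ p ∈ S₀, ∃ c, p.IsHomogeneous c)
    (hIS : I = Ideal.span ((fun f : MvPolynomial (Fin n) k =>
        (↑f : MvPowerSeries (Fin n) k)) '' S₀))
    (g : MvPowerSeries (Fin n) k) (m : ℕ) :
    g ∈ I ⊔ (mIdeal k n) ^ (m + 1) ↔ ∀ e ≤ m, hc e g ∈ I := by
  constructor
  · intro hg e he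
    obtain ⟨a, ha, b, hb, rfl⟩ := Submodule.mem_sup.mp hg
    have hcb : hc e b = 0 := by
      apply MvPowerSeries.ext; intro u
      rw [coeff_hc, map_zero]
      split_ifs with h1
      · exact coeff_eq_zero_of_mem_pow (m+1) b hb u (by omega)
      · rfl
    rw [hc_add, hcb, add_zero]
    exact hc_mem hS₀ hIS ha e
  · intro hg
    have : g = (∑ d ∈ Finset.range (m + 1), hc d g) + (g - ∑ d ∈ Finset.range (m + 1), hc d g) :=
      by ring
    rw [this]
    apply Submodule.add_mem
    · apply Submodule.mem_sup_left
      exact Submodule.sum_mem _ fun d hd => hg d (by simpa [Nat.lt_succ_iff] using hd)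
    · apply Submodule.mem_sup_right
      apply mem_pow_of_vanish
      intro e he
      rw [map_sub, coeff_sum_hc, if_pos he, sub_self]

/-- completeness: if all homogeneous components of `g` lie in `I`, then `g ∈ I`,
provided `I` is generated by finitely many homogeneous elements. -/
lemma closed {I : Ideal (MvPowerSeries (Fin n) k)} {ι : Type} [Fintype ι]
    (F : ι → MvPowerSeries (Fin n) k) (c : ι → ℕ)
    (Hhs : ∀ i, F i = hc (c i) (F i))
    (hspan : Ideal.span (Set.range F) = I)
    (g : MvPowerSeries (Fin n) k) (hall : ∀ d, hc d g ∈ I) : g ∈ I := by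
  classical
  have hA : ∀ d : ℕ, ∃ A : ι → MvPowerSeries (Fin n) k, ∑ i, A i * F i = hc d g := fun d =>
    Ideal.mem_span_range_iff_exists_fun.mp (by rw [hspan]; exact hall d)
  choose A hA using hA
  set r : ℕ → ι → MvPowerSeries (Fin n) k :=
    fun d i => if c i ≤ d then hc (d - c i) (A d i) else 0 with hr
  have hc_sum : ∀ (d : ℕ) (f : ι → MvPowerSeries (Fin n) k),
      hc d (∑ i, f i) = ∑ i, hc d (f i) := fun d f =>
    map_sum (MvPowerSeries.homogeneousComponent d) f Finset.univ
  have key : ∀ d, ∑ i, r d i * F i = hc d g := by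
    intro d
    have h1 : hc d (∑ i, A d i * F i) = hc d (hc d g) := congrArg (hc d) (hA d)
    rw [hc_hc_self] at h1
    rw [← h1, hc_sum]
    have h2 : ∀ i, hc d (A d i * F i) = r d i * F i := by
      intro i
      rw [hc_mul]
      by_cases hci : c i ≤ d
      · rw [Finset.sum_eq_single (d - c i, c i)]
        · simp only [hr, if_pos hci]
          congr 1
          exact (Hhs i).symm
        · intro p hp hne
          have hp' : p.1 + p.2 = d := Finset.HasAntidiagonal.mem_antidiagonal.mp hp
          by_cases h2c : p.2 = c i
          · exfalso; apply hne; apply Prod.ext _ h2c; omega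
          · rw [Hhs i, hc_ne h2c, mul_zero]
        · intro hnot
          exact absurd (Finset.HasAntidiagonal.mem_antidiagonal.mpr (by omega)) hnot
      · simp only [hr, if_neg hci, zero_mul]
        refine Finset.sum_eq_zero fun p hp => ?_
        have hp' : p.1 + p.2 = d := Finset.HasAntidiagonal.mem_antidiagonal.mp hp
        have : p.2 ≠ c i := by omega
        rw [Hhs i, hc_ne this, mul_zero]
    exact Finset.sum_congr rfl fun i _ => (h2 i).symm
  -- the "sum over d" of the r's, as a genuine power series
  set G : ι → MvPowerSeries (Fin n) k :=
    fun i e => MvPowerSeries.coeff e (r (e.degree + c i) i) with hG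
  have coeffG : ∀ i e, MvPowerSeries.coeff e (G i)
      = MvPowerSeries.coeff e (r (e.degree + c i) i) := fun _ _ => rfl
  have coeffr : ∀ d i u, u.degree ≠ d - c i → MvPowerSeries.coeff u (r d i) = 0 := by
    intro d i u hu
    simp only [hr]
    split_ifs with h1
    · rw [coeff_hc, if_neg hu]
    · rfl
  have hfinal : g = ∑ i, G i * F i := by
    apply MvPowerSeries.ext; intro e
    have h3 : MvPowerSeries.coeff e g = MvPowerSeries.coeff e (hc e.degree g) := by
      rw [coeff_hc, if_pos rfl]
    rw [h3, ← key e.degree, map_sum, map_sum]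
    refine Finset.sum_congr rfl fun i _ => ?_
    rw [MvPowerSeries.coeff_mul, MvPowerSeries.coeff_mul]
    refine Finset.sum_congr rfl fun q hq => ?_
    have hq' : q.1 + q.2 = e := Finset.HasAntidiagonal.mem_antidiagonal.mp hq
    by_cases hFv : MvPowerSeries.coeff q.2 (F i) = 0
    · rw [hFv, mul_zero, mul_zero]
    · have hdeg2 : q.2.degree = c i := by
        by_contra hne
        apply hFv
        rw [Hhs i, coeff_hc, if_neg hne]
      have hdeg1 : q.1.degree + c i = e.degree := by
        rw [← hdeg2, ← degree_add, hq']
      rw [coeffG, ← hdeg1]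
  rw [hfinal]
  refine Submodule.sum_mem _ fun i _ => ?_
  exact Ideal.mul_mem_left _ _ (by rw [← hspan]; exact Ideal.subset_span ⟨i, rfl⟩)

end FIaux

namespace FIaux

variable {k : Type} [Field k] {n : ℕ}

lemma pow_parts {I : Ideal (MvPowerSeries (Fin n) k)} {g : MvPowerSeries (Fin n) k} {d : ℕ}
    (hd1 : ∀ e < d, hc e g ∈ I) (s : ℕ) :
    (∀ e < s * d, hc e (g ^ s) ∈ I) ∧ hc (s * d) (g ^ s) - (hc d g) ^ s ∈ I := by
  classical
  induction s with
  | zero =>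
    constructor
    · intro e he; omega
    · rw [zero_mul, pow_zero, pow_zero]
      have h1 : hc 0 (1 : MvPowerSeries (Fin n) k) = 1 := by
        apply MvPowerSeries.ext; intro e
        rw [coeff_hc, MvPowerSeries.coeff_one]
        by_cases he : e = 0
        · rw [if_pos (by rw [he]; exact map_zero _), if_pos he]
        · rw [if_neg he]
          split_ifs with h2 <;> rfl
      rw [h1, sub_self]
      exact Submodule.zero_mem _
  | succ s ih =>
    have hsd : (s + 1) * d = s * d + d := by ring
    constructor
    · intro e he
      rw [pow_succ, hc_mul]
      refine Submodule.sum_mem _ fun p hp => ?_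
      have hp' : p.1 + p.2 = e := Finset.HasAntidiagonal.mem_antidiagonal.mp hp
      by_cases h1 : p.1 < s * d
      · exact Ideal.mul_mem_right _ _ (ih.1 p.1 h1)
      · exact Ideal.mul_mem_left _ _ (hd1 p.2 (by omega))
    · rw [pow_succ, hc_mul]
      have hmem : ((s * d : ℕ), d) ∈ Finset.HasAntidiagonal.antidiagonal ((s + 1) * d) :=
        Finset.HasAntidiagonal.mem_antidiagonal.mpr (by omega)
      rw [← Finset.sum_erase_add _ _ hmem]
      have h2 : ∀ p ∈ (Finset.HasAntidiagonal.antidiagonal ((s + 1) * d)).erase ((s * d : ℕ), d),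
          hc p.1 (g ^ s) * hc p.2 g ∈ I := by
        intro p hp
        obtain ⟨hne, hp2⟩ := Finset.mem_erase.mp hp
        have hp' : p.1 + p.2 = (s + 1) * d := Finset.HasAntidiagonal.mem_antidiagonal.mp hp2
        by_cases h1 : p.1 < s * d
        · exact Ideal.mul_mem_right _ _ (ih.1 p.1 h1)
        · by_cases h3 : p.2 < d
          · exact Ideal.mul_mem_left _ _ (hd1 p.2 h3)
          · exfalso; apply hne
            have : p.1 = s * d ∧ p.2 = d := by omega
            exact Prod.ext this.1 this.2
      have h3 : hc (s * d) (g ^ s) * hc d g - (hc d g) ^ (s + 1) ∈ I := by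
        have h4 := Ideal.mul_mem_right (hc d g) _ ih.2
        have h5 : (hc (s * d) (g ^ s) - (hc d g) ^ s) * hc d g
            = hc (s * d) (g ^ s) * hc d g - (hc d g) ^ (s + 1) := by ring
        rwa [h5] at h4
      have h6 : (∑ p ∈ (Finset.HasAntidiagonal.antidiagonal ((s + 1) * d)).erase ((s * d : ℕ), d),
            hc p.1 (g ^ s) * hc p.2 g) + hc (s * d) (g ^ s) * hc d g - (hc d g) ^ (s + 1)
          = (∑ p ∈ (Finset.HasAntidiagonal.antidiagonal ((s + 1) * d)).erase ((s * d : ℕ), d),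
            hc p.1 (g ^ s) * hc p.2 g) + (hc (s * d) (g ^ s) * hc d g - (hc d g) ^ (s + 1)) := by
        ring
      rw [h6]
      exact Submodule.add_mem _ (Submodule.sum_mem _ h2) h3

lemma mem_map_mk_iff {I K : Ideal (MvPowerSeries (Fin n) k)} (hIK : I ≤ K)
    (g : MvPowerSeries (Fin n) k) :
    Ideal.Quotient.mk I g ∈ K.map (Ideal.Quotient.mk I) ↔ g ∈ K := by
  constructor
  · intro h
    obtain ⟨y, hy, hy2⟩ := (Ideal.mem_map_iff_of_surjective _ Ideal.Quotient.mk_surjective).mp h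
    have hsub : y - g ∈ I := Ideal.Quotient.eq.mp hy2
    have hg : g = y - (y - g) := by ring
    rw [hg]
    exact Submodule.sub_mem _ hy (hIK hsub)
  · exact fun h => Ideal.mem_map_of_mem _ h

lemma sup_eval (d : ℕ) : (⨆ (m : ℕ) (_ : m + 1 ≤ d), ((m : ℕ∞) + 1)) = (d : ℕ∞) := by
  apply le_antisymm
  · refine iSup_le fun m => iSup_le fun hm => ?_
    exact_mod_cast hm
  · cases d with
    | zero => simp
    | succ d =>
      have h1 : ((d + 1 : ℕ) : ℕ∞) = (d : ℕ∞) + 1 := by push_cast; ring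
      rw [h1]
      refine le_trans ?_ (le_iSup _ d)
      rw [iSup_pos (by omega : d + 1 ≤ d + 1)]

lemma iSup_add_one_top : (⨆ m : ℕ, ((m : ℕ∞) + 1)) = ⊤ := by
  rw [iSup_eq_top]
  intro b hb
  lift b to ℕ using hb.ne
  exact ⟨b, by exact_mod_cast Nat.lt_succ_self b⟩

lemma fI_zero {I : Ideal (MvPowerSeries (Fin n) k)} : fI k I 0 = ⊤ := by
  have h : ∀ m : ℕ, (0 : MvPowerSeries (Fin n) k ⧸ I)
      ∈ (I ⊔ (mIdeal k n) ^ (m + 1)).map (Ideal.Quotient.mk I) := fun m => Submodule.zero_mem _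
  calc fI k I 0 = ⨆ m : ℕ, ((m : ℕ∞) + 1) := by
        simp only [fI]; exact iSup_congr fun m => iSup_pos (h m)
    _ = ⊤ := iSup_add_one_top

lemma fI_eq {I : Ideal (MvPowerSeries (Fin n) k)} {g : MvPowerSeries (Fin n) k} {d : ℕ}
    (hmem : ∀ m : ℕ, (Ideal.Quotient.mk I g
        ∈ (I ⊔ (mIdeal k n) ^ (m + 1)).map (Ideal.Quotient.mk I)) ↔ m + 1 ≤ d) :
    fI k I (Ideal.Quotient.mk I g) = d := by
  calc fI k I (Ideal.Quotient.mk I g)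
      = ⨆ (m : ℕ) (_ : m + 1 ≤ d), ((m : ℕ∞) + 1) := by
        simp only [fI]; exact iSup_congr fun m => by rw [propext (hmem m)]
    _ = d := sup_eval d

end FIaux


open FIaux

/-- for a proper ideal `I` of `k[[x_1, ..., x_n]]` which is homogeneous
(extended from an ideal generated by homogeneous polynomials) or a monomial ideal, the
filtration `f_I` determined by `{I + 𝔪^(m+1)}_m` is homogeneous
(`f_I (x^s) = s · f_I x` for all `s`, `x`) if and only if `I` is a radical ideal. -/
theorem fI_homogeneous_iff_radical (k : Type) [Field k] [IsAlgClosed k] [CharZero k]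
    (n : ℕ) (I : Ideal (MvPowerSeries (Fin n) k)) (hI : I ≠ ⊤)
    (h : (∃ S : Set (MvPolynomial (Fin n) k),
            (∀ f ∈ S, ∃ d, MvPolynomial.IsHomogeneous f d) ∧
            I = Ideal.span ((fun f : MvPolynomial (Fin n) k => (↑f : MvPowerSeries (Fin n) k)) '' S)) ∨
        (∃ S : Set (Fin n →₀ ℕ),
            I = Ideal.span ((fun d => MvPowerSeries.monomial d (1 : k)) '' S))) :
    (∀ (x : MvPowerSeries (Fin n) k ⧸ I) (s : ℕ), fI k I (x ^ s) = (s : ℕ∞) * fI k I x) ↔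
      I.radical = I := by
  classical
  -- Step 1: both cases give homogeneous polynomial generators
  obtain ⟨S₀, hS₀, hIS⟩ : ∃ S₀ : Set (MvPolynomial (Fin n) k),
      (∀ p ∈ S₀, ∃ c, p.IsHomogeneous c) ∧
      I = Ideal.span ((fun f : MvPolynomial (Fin n) k => (↑f : MvPowerSeries (Fin n) k)) '' S₀) := by
    rcases h with ⟨S, hhom, hspan⟩ | ⟨S, hspan⟩
    · exact ⟨S, hhom, hspan⟩
    · refine ⟨(fun e => MvPolynomial.monomial e (1 : k)) '' S, ?_, ?_⟩
      · rintro p ⟨e, _, rfl⟩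
        exact ⟨e.degree, MvPolynomial.isHomogeneous_monomial _ rfl⟩
      · rw [hspan, Set.image_image]
        exact congrArg Ideal.span
          (Set.image_congr' (fun e => (MvPolynomial.coe_monomial e 1).symm))
  have hc_memI : ∀ x ∈ I, ∀ d, hc d x ∈ I := fun x hx d => hc_mem hS₀ hIS hx d
  have hstar : ∀ (g : MvPowerSeries (Fin n) k) (m : ℕ),
      g ∈ I ⊔ (mIdeal k n) ^ (m + 1) ↔ ∀ e ≤ m, hc e g ∈ I := star hS₀ hIS
  -- Step 2: closedness under taking all homogeneous components
  have hclosed : ∀ g : MvPowerSeries (Fin n) k, (∀ d, hc d g ∈ I) → g ∈ I := by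
    obtain ⟨T, hT⟩ := IsNoetherian.noetherian (Ideal.span S₀ : Ideal (MvPolynomial (Fin n) k))
    have himg : ∀ (U : Set (MvPolynomial (Fin n) k)),
        (MvPolynomial.coeToMvPowerSeries.ringHom (R := k) (σ := Fin n)) '' U
          = (fun f : MvPolynomial (Fin n) k => (↑f : MvPowerSeries (Fin n) k)) '' U :=
      fun U => Set.image_congr' (fun p => MvPolynomial.coeToMvPowerSeries.ringHom_apply p)
    have hT' : Ideal.span (↑T : Set (MvPolynomial (Fin n) k)) = Ideal.span S₀ := hT
    have hIT : I = Ideal.span ((fun f : MvPolynomial (Fin n) k =>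
        (↑f : MvPowerSeries (Fin n) k)) '' ↑T) := by
      rw [hIS, ← himg, ← Ideal.map_span, ← hT', Ideal.map_span, himg]
    set D := T.sup MvPolynomial.totalDegree with hD
    set F : {x // x ∈ T} × Fin (D + 1) → MvPowerSeries (Fin n) k :=
      fun q => hc (q.2 : ℕ) ((q.1 : MvPolynomial (Fin n) k) : MvPowerSeries (Fin n) k) with hF
    have hFI : ∀ q, F q ∈ I := by
      intro q
      apply hc_memI
      rw [hIT]
      exact Ideal.subset_span ⟨(q.1 : MvPolynomial (Fin n) k), q.1.2, rfl⟩
    have hspanF : Ideal.span (Set.range F) = I := by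
      apply le_antisymm
      · rw [Ideal.span_le]; rintro x ⟨q, rfl⟩; exact hFI q
      · conv_lhs => rw [hIT]
        rw [Ideal.span_le]
        rintro x ⟨p, hp, rfl⟩
        have hbound : ∀ e : Fin n →₀ ℕ, D < e.degree →
            MvPowerSeries.coeff e (↑p : MvPowerSeries (Fin n) k) = 0 := by
          intro e he
          rw [MvPolynomial.coeff_coe]
          apply MvPolynomial.coeff_eq_zero_of_totalDegree_lt
          have h1 : p.totalDegree ≤ D := Finset.le_sup hp
          have h2 : e.degree = ∑ i ∈ e.support, e i := rfl
          omega
        have hploc : (↑p : MvPowerSeries (Fin n) k)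
            = ∑ d ∈ Finset.range (D + 1), hc d (↑p : MvPowerSeries (Fin n) k) :=
          eq_sum_hc hbound
        show (↑p : MvPowerSeries (Fin n) k) ∈ Ideal.span (Set.range F)
        rw [hploc]
        refine Submodule.sum_mem _ fun d hd => ?_
        have hdlt : d < D + 1 := Finset.mem_range.mp hd
        exact Ideal.subset_span ⟨(⟨p, hp⟩, ⟨d, hdlt⟩), rfl⟩
    intro g hall
    exact closed F (fun q => (q.2 : ℕ)) (fun q => (hc_hc_self _ _).symm) hspanF g hall
  have hone : (1 : MvPowerSeries (Fin n) k) ∉ I := fun hmem =>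
    hI ((Ideal.eq_top_iff_one I).mpr hmem)
  have hc01 : hc 0 (1 : MvPowerSeries (Fin n) k) = 1 := by
    apply MvPowerSeries.ext; intro e
    rw [coeff_hc]
    by_cases he : e = 0
    · rw [if_pos (by rw [he]; exact map_zero _)]
    · rw [MvPowerSeries.coeff_one, if_neg he]
      split_ifs with h2 <;> rfl
  -- fI value via homogeneous components
  have fI_val : ∀ (g : MvPowerSeries (Fin n) k) (d : ℕ), (∀ e < d, hc e g ∈ I) →
      hc d g ∉ I → fI k I (Ideal.Quotient.mk I g) = d := by
    intro g d h1 h2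
    apply fI_eq
    intro m
    rw [mem_map_mk_iff le_sup_left, hstar]
    constructor
    · intro H
      by_contra hmd
      exact h2 (H d (by omega))
    · intro H e he
      exact h1 e (by omega)
  constructor
  · -- homogeneous filtration implies radical
    intro Hhom
    refine le_antisymm ?_ Ideal.le_radical
    intro x hx
    obtain ⟨s, hs⟩ := hx
    by_cases hs0 : s = 0
    · subst hs0; rw [pow_zero] at hs; exact absurd hs hone
    have h1 : fI k I ((Ideal.Quotient.mk I x) ^ s) = ⊤ := by
      rw [← map_pow, Ideal.Quotient.eq_zero_iff_mem.mpr hs]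
      exact fI_zero
    rw [Hhom] at h1
    have h2 : fI k I (Ideal.Quotient.mk I x) = ⊤ := by
      rcases WithTop.mul_eq_top_iff.mp h1 with ⟨_, h⟩ | ⟨h, _⟩
      · exact h
      · exact absurd h (by
          intro hcon
          exact (lt_irrefl (⊤ : ℕ∞)) (hcon ▸ (by exact_mod_cast WithTop.coe_lt_top s : ((s:ℕ):ℕ∞) < ⊤)))
    have h3 : ∀ d : ℕ, hc d x ∈ I := by
      intro d
      have hlt : (d : ℕ∞) < fI k I (Ideal.Quotient.mk I x) := by
        rw [h2]; exact WithTop.coe_lt_top d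
      rw [fI] at hlt
      obtain ⟨m, hm⟩ := lt_iSup_iff.mp hlt
      by_cases hmem : Ideal.Quotient.mk I x
          ∈ (I ⊔ (mIdeal k n) ^ (m + 1)).map (Ideal.Quotient.mk I)
      · rw [iSup_pos hmem] at hm
        have hdm' : d < m + 1 := by exact_mod_cast hm
        have hdm : d ≤ m := by omega
        have := (mem_map_mk_iff le_sup_left _).mp hmem
        rw [hstar] at this
        exact this d hdm
      · rw [iSup_neg hmem] at hm
        exact absurd hm (by simp)
    exact hclosed x h3
  · -- radical implies homogeneous filtration
    intro hrad x s
    obtain ⟨g, rfl⟩ := Ideal.Quotient.mk_surjective x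
    by_cases hg : g ∈ I
    · have hzero : Ideal.Quotient.mk I g = 0 := Ideal.Quotient.eq_zero_iff_mem.mpr hg
      rw [hzero]
      cases s with
      | zero =>
        rw [pow_zero, Nat.cast_zero, zero_mul]
        have hone' : (1 : MvPowerSeries (Fin n) k ⧸ I) = Ideal.Quotient.mk I 1 :=
          (map_one (Ideal.Quotient.mk I)).symm
        rw [hone']
        have := fI_val 1 0 (by intro e he; omega) (by rw [hc01]; exact hone)
        rw [this, Nat.cast_zero]
      | succ s =>
        rw [zero_pow (Nat.succ_ne_zero s), fI_zero]
        exact (WithTop.mul_top (Nat.cast_ne_zero.mpr (Nat.succ_ne_zero s))).symm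
    · have hex : ∃ d, hc d g ∉ I := by
        by_contra hcon
        push_neg at hcon
        exact hg (hclosed g hcon)
      have hd2 : hc (Nat.find hex) g ∉ I := Nat.find_spec hex
      have hd1 : ∀ e < Nat.find hex, hc e g ∈ I := fun e he => not_not.mp (Nat.find_min hex he)
      have hpow := pow_parts hd1 s
      have hd2' : hc (s * Nat.find hex) (g ^ s) ∉ I := by
        intro hmem
        have hsub : (hc (Nat.find hex) g) ^ s ∈ I := by
          have h4 : (hc (Nat.find hex) g) ^ s = hc (s * Nat.find hex) (g ^ s)
              - (hc (s * Nat.find hex) (g ^ s) - (hc (Nat.find hex) g) ^ s) := by ring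
          rw [h4]
          exact Submodule.sub_mem _ hmem hpow.2
        have hmem2 : hc (Nat.find hex) g ∈ I.radical := ⟨s, hsub⟩
        rw [hrad] at hmem2
        exact hd2 hmem2
      have e1 : fI k I (Ideal.Quotient.mk I g) = Nat.find hex := fI_val g _ hd1 hd2
      have e2 : fI k I ((Ideal.Quotient.mk I g) ^ s) = ((s * Nat.find hex : ℕ) : ℕ∞) := by
        rw [← map_pow]
        exact fI_val (g ^ s) _ hpow.1 hd2'
      rw [e1, e2, Nat.cast_mul]
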